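/- Let βℕ be the Stone–Čech compactification of the discrete space ℕ and let X ⊆ βℕ be an infinite subspace which is pseudocompact (every continuous function X → ℝ is bounded). Then there exists a countable set A ⊆ X such that there is no continuous mapping φ : C_p*(A) → C_p(X) with φ(y)|_A = y for every y ∈ C_p*(A). -/

import Mathlib

open Set Topology Filter
open scoped Classical

/-- `C_p(X)`: the continuous real-valued functions on `X`, topologized by pointwise
convergence (i.e. as a subspace of `X → ℝ` with the product topology). -/
abbrev Cp (X : Type*) [TopologicalSpace X] : Type _ := {f : X → ℝ // Continuous f}

/-- `C_p*(X)`: the bounded continuous real-valued functions on `X`, topologized by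
pointwise convergence. -/
abbrev CpStar (X : Type*) [TopologicalSpace X] : Type _ :=
  {f : X → ℝ // Continuous f ∧ ∃ M : ℝ, ∀ x, |f x| ≤ M}

/-- A set is functionally open (a cozero set) if it is the cozero set of a
continuous real-valued function. -/
def FunctionallyOpen {X : Type*} [TopologicalSpace X] (U : Set X) : Prop :=
  ∃ f : X → ℝ, Continuous f ∧ U = f ⁻¹' ({0}ᶜ)

/-- A subset `A` is strongly functionally discrete in `X` if there is a family of
functionally open sets `G a ∋ a` (for `a ∈ A`) which is discrete in `X`: every point
of `X` has a neighborhood meeting `G a` for at most one `a ∈ A`. -/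
def StronglyFunctionallyDiscrete {X : Type*} [TopologicalSpace X] (A : Set X) : Prop :=
  ∃ G : A → Set X,
    (∀ a : A, (a : X) ∈ G a) ∧
    (∀ a : A, FunctionallyOpen (G a)) ∧
    (∀ x : X, ∃ V ∈ 𝓝 x, {a : A | (V ∩ G a).Nonempty}.Subsingleton)

/-- If `X ⊆ βℕ` is an infinite pseudocompact subspace, then there is a countable
`A ⊆ X` admitting no continuous extender `C_p*(A) → C_p(X)`. -/

lemma aux_discrete {Y : Type*} [TopologicalSpace Y] [T1Space Y] [RegularSpace Y] [Infinite Y] :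
    ∃ (a : ℕ → Y) (V : ℕ → Set Y), (∀ n, IsOpen (V n)) ∧ (∀ n, a n ∈ V n) ∧
      ∀ m n, a m ∈ V n → m = n := by
  have key : ∀ W : Set Y, IsOpen W → W.Infinite →
      ∃ (x : Y) (V W' : Set Y), IsOpen V ∧ IsOpen W' ∧ W'.Infinite ∧ x ∈ V ∧ V ⊆ W ∧ W' ⊆ W ∧
        ∀ y ∈ V, y ∉ W' := by
    intro W hWo hWinf
    obtain ⟨p, hp, q, hq, hpq⟩ := hWinf.nontrivial
    have h1 : W \ {q} ∈ 𝓝 p := (hWo.sdiff isClosed_singleton).mem_nhds ⟨hp, hpq⟩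
    obtain ⟨U0, hU0n, hU0c, hU0s⟩ := exists_mem_nhds_isClosed_subset h1
    have hpU : p ∈ interior U0 := mem_interior_iff_mem_nhds.mpr hU0n
    have hclU : closure (interior U0) ⊆ W \ {q} :=
      (closure_minimal interior_subset hU0c).trans hU0s
    by_cases hbig : (W \ closure (interior U0)).Infinite
    · refine ⟨p, interior U0, W \ closure (interior U0), isOpen_interior,
        hWo.sdiff isClosed_closure, hbig, hpU,
        fun x hx => (hclU (subset_closure hx)).1, diff_subset, fun y hy hy' => hy'.2 (subset_closure hy)⟩
    · have hWcl : (W ∩ closure (interior U0)).Infinite := by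
        have := hWinf.diff (Set.not_infinite.mp hbig)
        rwa [Set.diff_diff_right_self] at this
      have hqW : q ∈ W \ closure (interior U0) := ⟨hq, fun h => (hclU h).2 rfl⟩
      obtain ⟨V0, hV0n, hV0c, hV0s⟩ := exists_mem_nhds_isClosed_subset
        ((hWo.sdiff isClosed_closure).mem_nhds hqW)
      have hqV : q ∈ interior V0 := mem_interior_iff_mem_nhds.mpr hV0n
      have hclV : closure (interior V0) ⊆ W \ closure (interior U0) :=
        (closure_minimal interior_subset hV0c).trans hV0s
      refine ⟨q, interior V0, W \ closure (interior V0), isOpen_interior,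
        hWo.sdiff isClosed_closure, ?_, hqV,
        fun x hx => (hclV (subset_closure hx)).1, diff_subset,
        fun y hy hy' => hy'.2 (subset_closure hy)⟩
      refine hWcl.mono fun x hx => ⟨hx.1, fun hxV => (hclV hxV).2 hx.2⟩
  choose x V W' hVo hWo' hWinf' hxV hVW hW'W hdisj using key
  let T := {W : Set Y // IsOpen W ∧ W.Infinite}
  let step : T → T := fun W => ⟨W' W.1 W.2.1 W.2.2, hWo' _ _ _, hWinf' _ _ _⟩
  let g : ℕ → T := fun n => Nat.rec (⟨univ, isOpen_univ, Set.infinite_univ⟩ : T) (fun _ p => step p) n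
  have hgs : ∀ n, g (n + 1) = step (g n) := fun n => rfl
  refine ⟨fun n => x (g n).1 (g n).2.1 (g n).2.2, fun n => V (g n).1 (g n).2.1 (g n).2.2,
    fun n => hVo _ _ _, fun n => hxV _ _ _, ?_⟩
  have hdis : ∀ n y, y ∈ V (g n).1 (g n).2.1 (g n).2.2 → y ∉ (g (n+1)).1 := by
    intro n yy h
    rw [hgs n]
    exact hdisj _ _ _ _ h
  have hmono : ∀ n m, n ≤ m → (g m).1 ⊆ (g n).1 := by
    intro n m h
    induction m with
    | zero => cases Nat.le_zero.mp h; exact fun _ h => h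
    | succ m ih =>
      rcases Nat.lt_or_ge n (m+1) with h' | h'
      · have h2 : (g (m+1)).1 ⊆ (g m).1 := by rw [hgs m]; exact hW'W _ _ _
        exact h2.trans (ih (Nat.lt_succ_iff.mp h'))
      · have : n = m + 1 := le_antisymm h h'
        subst this; exact fun _ h => h
  intro m n h
  rcases lt_trichotomy m n with hlt | he | hgt
  · exact absurd (hmono (m+1) n hlt ((hVW _ _ _) h)) (hdis m _ (hxV _ _ _))
  · exact he
  · have hm : x (g m).1 (g m).2.1 (g m).2.2 ∈ (g (n+1)).1 :=
      hmono (n+1) m hgt ((hVW _ _ _) (hxV _ _ _))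
    exact absurd hm (hdis n _ h)
open Set Topology Filter
open scoped Classical


theorem stmt_11 (X : Set (StoneCech ℕ)) (hinf : X.Infinite)
    (hpc : ∀ f : X → ℝ, Continuous f → ∃ M : ℝ, ∀ x, |f x| ≤ M) :
    ∃ A : Set X, A.Countable ∧
      ¬ ∃ φ : CpStar A → Cp X, Continuous φ ∧
        ∀ y : CpStar A, ∀ a : A, (φ y).1 a = y.1 a := by
  haveI : Infinite X := hinf.to_subtype
  obtain ⟨a, V, hVo, haV, hsep⟩ := aux_discrete (Y := X)
  have hainj : Function.Injective a := fun k l h => hsep k l (by rw [h]; exact haV l)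
  refine ⟨Set.range a, countable_range a, ?_⟩
  rintro ⟨φ, hφc, hφe⟩
  haveI : DiscreteTopology ↥(Set.range a) := by
    rw [discreteTopology_iff_isOpen_singleton]
    rintro ⟨-, n, rfl⟩
    have he : {(⟨a n, ⟨n, rfl⟩⟩ : ↥(Set.range a))} = Subtype.val ⁻¹' (V n) := by
      ext ⟨-, m, rfl⟩
      simp only [mem_singleton_iff, mem_preimage, Subtype.mk.injEq]
      constructor
      · rintro h; have hh : a m = a n := congrArg Subtype.val h; rw [hh]; exact haV n
      · intro h; exact Subtype.ext (congrArg a (hsep m n h))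
    rw [he]
    exact (hVo n).preimage continuous_subtype_val
  -- the test functions
  set y : ℕ → CpStar (Set.range a) := fun j =>
    ⟨fun i => if ∃ k, k < j ∧ a k = ↑i then 0 else 1,
     continuous_of_discreteTopology, 1, fun i => by dsimp only; split_ifs <;> norm_num⟩
    with hy_def
  set y0 : CpStar (Set.range a) :=
    ⟨fun _ => 0, continuous_const, 0, fun i => by norm_num⟩ with hy0_def
  have hg0a : ∀ k, (φ y0).1 (a k) = 0 := by
    intro k
    have := hφe y0 ⟨a k, ⟨k, rfl⟩⟩
    simpa [hy0_def] using this
  have hga : ∀ j k, j ≤ k → (φ (y j)).1 (a k) = 1 := by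
    intro j k hjk
    have h1 := hφe (y j) ⟨a k, ⟨k, rfl⟩⟩
    have h2 : (y j).1 ⟨a k, ⟨k, rfl⟩⟩ = 1 := by
      rw [hy_def]
      dsimp only
      rw [if_neg]
      rintro ⟨k', hk', he'⟩
      have := hainj he'
      omega
    rw [h2] at h1
    simpa using h1
  set O : ℕ → Set X := fun m => {x | (φ y0).1 x < 4⁻¹ ∧ ∀ i < m, 3/4 < (φ (y i)).1 x}
    with hO_def
  have haO : ∀ m k, m ≤ k → a k ∈ O m := by
    intro m k h
    rw [hO_def]
    refine ⟨by rw [hg0a]; norm_num, fun i hi => by rw [hga i k (by omega)]; norm_num⟩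
  have hOanti : ∀ m j, m ≤ j → O j ⊆ O m := by
    intro m j h xx hx
    rw [hO_def] at hx ⊢
    exact ⟨hx.1, fun i hi => hx.2 i (lt_of_lt_of_le hi h)⟩
  by_cases hne : (⋂ m, closure (O m)).Nonempty
  · -- a cluster point exists: contradict continuity of φ at y0
    obtain ⟨z, hz⟩ := hne
    rw [mem_iInter] at hz
    have hub : (φ y0).1 z ≤ 4⁻¹ := by
      have h1 : closure (O 0) ⊆ {x | (φ y0).1 x ≤ 4⁻¹} := by
        refine closure_minimal (fun x hx => ?_) (isClosed_le (φ y0).2 continuous_const)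
        rw [hO_def] at hx
        simp only [mem_setOf_eq]
        exact le_of_lt hx.1
      exact h1 (hz 0)
    have hlb : ∀ j, (3/4 : ℝ) ≤ (φ (y j)).1 z := by
      intro j
      have h1 : closure (O (j+1)) ⊆ {x | 3/4 ≤ (φ (y j)).1 x} := by
        refine closure_minimal (fun x hx => ?_) (isClosed_le continuous_const (φ (y j)).2)
        rw [hO_def] at hx
        simp only [mem_setOf_eq]
        exact le_of_lt (hx.2 j (Nat.lt_succ_self j))
      exact h1 (hz (j+1))
    have hψ : Continuous fun u : CpStar (Set.range a) => (φ u).1 z :=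
      (continuous_apply z).comp (continuous_subtype_val.comp hφc)
    have hsmem : {u : CpStar (Set.range a) | |(φ u).1 z - (φ y0).1 z| < 2⁻¹} ∈ 𝓝 y0 := by
      have ho : IsOpen {u : CpStar (Set.range a) | |(φ u).1 z - (φ y0).1 z| < 2⁻¹} :=
        isOpen_lt (hψ.sub continuous_const).abs continuous_const
      exact ho.mem_nhds (by simp)
    rw [nhds_induced, Filter.mem_comap] at hsmem
    obtain ⟨T, hT, hTs⟩ := hsmem
    rw [nhds_pi, Filter.mem_pi] at hT
    obtain ⟨I, hIfin, t, ht, hIt⟩ := hT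
    set r : ↥(Set.range a) → ℕ := fun i => Classical.choose i.2 with hr_def
    have hr : ∀ i : ↥(Set.range a), a (r i) = ↑i := fun i => Classical.choose_spec i.2
    set m := (hIfin.toFinset.sup r) + 1 with hm_def
    have hym : (y m).1 ∈ I.pi t := by
      intro i hi
      have h0 : (y m).1 i = 0 := by
        rw [hy_def]
        dsimp only
        have hri : r i < m := by
          have := Finset.le_sup (f := r) (hIfin.mem_toFinset.mpr hi)
          omega
        rw [if_pos ⟨r i, hri, hr i⟩]
      rw [h0]
      have := mem_of_mem_nhds (ht i)
      simpa [hy0_def] using this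
    have hfin : |(φ (y m)).1 z - (φ y0).1 z| < 2⁻¹ := hTs (hIt hym)
    have h3 := (abs_lt.mp hfin).2
    have h4 := hlb m
    linarith
  · -- no cluster point: build an unbounded continuous function
    have hM : ∀ x : X, ∃ m, x ∉ closure (O m) := by
      intro x; by_contra h; push_neg at h; exact hne ⟨x, mem_iInter.mpr h⟩
    choose M hMsp using hM
    set c0 : X → ℝ := fun x => max 0 (min 1 (4 * (4⁻¹ - (φ y0).1 x))) with hc0_def
    set c : ℕ → X → ℝ := fun i x => max 0 (min 1 (4 * ((φ (y i)).1 x - 3/4))) with hc_def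
    set f : ℕ → X → ℝ := fun j x => (j : ℝ) * (c0 x * ∏ i ∈ Finset.range j, c i x) with hf_def
    have hc0c : Continuous c0 :=
      continuous_const.max (continuous_const.min (continuous_const.mul
        (continuous_const.sub (φ y0).2)))
    have hcc : ∀ i, Continuous (c i) := fun i =>
      continuous_const.max (continuous_const.min (continuous_const.mul
        ((φ (y i)).2.sub continuous_const)))
    have hfc : ∀ j, Continuous (f j) := fun j =>
      continuous_const.mul (hc0c.mul (continuous_finset_prod _ fun i _ => hcc i))
    have hc0nn : ∀ x, 0 ≤ c0 x := fun x => le_max_left _ _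
    have hcnn : ∀ i x, 0 ≤ c i x := fun i x => le_max_left _ _
    have hfnn : ∀ j x, 0 ≤ f j x := fun j x =>
      mul_nonneg (Nat.cast_nonneg j) (mul_nonneg (hc0nn x) (Finset.prod_nonneg fun i _ => hcnn i x))
    have hfO : ∀ j (x : X), x ∉ O j → f j x = 0 := by
      intro j x hx
      rw [hO_def] at hx
      simp only [mem_setOf_eq, not_and, not_forall, not_lt] at hx
      by_cases h1 : (φ y0).1 x < 4⁻¹
      · obtain ⟨i, hi, hle⟩ := hx h1
        have hci : c i x = 0 := by
          rw [hc_def]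
          dsimp only
          have h2 : min 1 (4 * ((φ (y i)).1 x - 3/4)) ≤ 0 :=
            le_trans (min_le_right _ _) (by linarith)
          exact max_eq_left h2
        rw [hf_def]
        dsimp only
        rw [Finset.prod_eq_zero (Finset.mem_range.mpr hi) hci, mul_zero, mul_zero]
      · have hc00 : c0 x = 0 := by
          rw [hc0_def]
          dsimp only
          push_neg at h1
          have h2 : min 1 (4 * (4⁻¹ - (φ y0).1 x)) ≤ 0 :=
            le_trans (min_le_right _ _) (by linarith)
          exact max_eq_left h2
        rw [hf_def]
        dsimp only
        rw [hc00, zero_mul, mul_zero]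
    have hfval : ∀ k, f k (a k) = k := by
      intro k
      have h0 : c0 (a k) = 1 := by
        rw [hc0_def]; dsimp only; rw [hg0a k]; norm_num
      have h1 : ∀ i ∈ Finset.range k, c i (a k) = 1 := by
        intro i hi
        rw [hc_def]; dsimp only
        rw [hga i k (le_of_lt (Finset.mem_range.mp hi))]
        norm_num
      rw [hf_def]; dsimp only
      rw [h0, Finset.prod_congr rfl h1, Finset.prod_const_one, mul_one, mul_one]
    have hzero' : ∀ n (xx : X), xx ∉ closure (O n) → ∀ j, n ≤ j → f j xx = 0 :=
      fun n xx hxx j hj => hfO j xx fun h => hxx (subset_closure (hOanti n j hj h))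
    have hFeq : ∀ n (xx : X), xx ∉ closure (O n) →
        ∑' j, f j xx = ∑ j ∈ Finset.range n, f j xx := by
      intro n xx hxx
      refine tsum_eq_sum fun j hj => hzero' n xx hxx j ?_
      exact not_lt.mp fun h => hj (Finset.mem_range.mpr h)
    have hFc : Continuous fun x : X => ∑' j, f j x := by
      rw [continuous_iff_continuousAt]
      intro x
      have hopen : IsOpen (closure (O (M x)))ᶜ := isClosed_closure.isOpen_compl
      have hxmem : x ∈ (closure (O (M x)))ᶜ := hMsp x
      refine ContinuousAt.congr
        ((continuous_finset_sum (Finset.range (M x)) fun j _ => hfc j).continuousAt) ?_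
      filter_upwards [hopen.mem_nhds hxmem] with xx hxx
      exact (hFeq (M x) xx hxx).symm
    obtain ⟨B, hB⟩ := hpc _ hFc
    obtain ⟨k, hk⟩ := exists_nat_gt B
    have hkM : k < M (a k) := by
      by_contra h
      push_neg at h
      exact hMsp (a k) (subset_closure (hOanti _ _ h (haO k k le_rfl)))
    have hFk : (k : ℝ) ≤ ∑' j, f j (a k) := by
      rw [hFeq (M (a k)) (a k) (hMsp (a k))]
      calc (k : ℝ) = f k (a k) := (hfval k).symm
        _ ≤ ∑ j ∈ Finset.range (M (a k)), f j (a k) :=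
          Finset.single_le_sum (fun i _ => hfnn i (a k)) (Finset.mem_range.mpr hkM)
    have h5 := hB (a k)
    have h6 : (∑' j, f j (a k)) ≤ |∑' j, f j (a k)| := le_abs_self _
    linarith
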